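/- Let N ≥ 1 and equip the space of N×N complex matrices with the normalized Hilbert–Schmidt inner product ⟨A,B⟩ = tr(A†B)/N. Let (P_i) be an orthonormal basis of this matrix space with respect to this inner product, and let Φ be a linear map on N×N complex matrices with Φ(P_i) = α_i P_i for complex scalars α_i. Let ρ be a positive semidefinite N×N matrix with tr(ρ) = 1, and let Π be an N×N Hermitian matrix with 0 ≤ Π ≤ I and rank(Π) ≤ r. Then |tr(Π† Φ(ρ))|² ≤ tr(Π²) · max_i |α_i|² ≤ r · max_i |α_i|². -/

import Mathlib

open scoped BigOperators Matrix ComplexOrder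

open Matrix in
private lemma aux_trace_sq_eq {n : Type*} [Fintype n] [DecidableEq n] {A : Matrix n n ℂ}
    (hA : A.IsHermitian) : (A * A).trace = ((∑ i, hA.eigenvalues i ^ 2 : ℝ) : ℂ) := by
  conv_lhs => rw [hA.spectral_theorem]
  simp only [Unitary.conjStarAlgAut_apply]
  set U := (hA.eigenvectorUnitary : Matrix n n ℂ)
  set D := diagonal (RCLike.ofReal ∘ hA.eigenvalues : n → ℂ)
  have hU : star U * U = 1 := Unitary.coe_star_mul_self hA.eigenvectorUnitary
  have : U * D * star U * (U * D * star U) = U * (D * D) * star U := by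
    rw [Matrix.mul_assoc, Matrix.mul_assoc, Matrix.mul_assoc]
    rw [← Matrix.mul_assoc (star U), hU, Matrix.one_mul, ← Matrix.mul_assoc,
      ← Matrix.mul_assoc, ← Matrix.mul_assoc]
  rw [this, Matrix.trace_mul_comm, ← Matrix.mul_assoc, hU, Matrix.one_mul]
  simp [D, diagonal_mul_diagonal, trace_diagonal, Function.comp, pow_two]

open Matrix in
private lemma aux_trace_eq {n : Type*} [Fintype n] [DecidableEq n] {A : Matrix n n ℂ}
    (hA : A.IsHermitian) : A.trace = ((∑ i, hA.eigenvalues i : ℝ) : ℂ) := by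
  conv_lhs => rw [hA.spectral_theorem]
  simp only [Unitary.conjStarAlgAut_apply]
  rw [Matrix.trace_mul_comm, ← Matrix.mul_assoc,
    Unitary.coe_star_mul_self hA.eigenvectorUnitary, Matrix.one_mul]
  simp [trace_diagonal, Function.comp]

open Matrix in
private lemma aux_eig_le_one {n : Type*} [Fintype n] [DecidableEq n] {A : Matrix n n ℂ}
    (hA : A.PosSemidef) (hA1 : (1 - A).PosSemidef) (i : n) :
    hA.1.eigenvalues i ≤ 1 := by
  set v : n → ℂ := ⇑(hA.1.eigenvectorBasis i) with hv
  have hnorm : dotProduct (star v) v = 1 := by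
    rw [hv, dotProduct_comm, ← EuclideanSpace.inner_eq_star_dotProduct]
    simp only [inner_self_eq_norm_sq_to_K, hA.1.eigenvectorBasis.orthonormal.1 i]
    norm_num
  have heig := hA.1.eigenvalues_eq i
  have hle := hA1.dotProduct_mulVec_nonneg v
  have heq : dotProduct (star v) ((1 - A) *ᵥ v) =
      1 - dotProduct (star v) (A *ᵥ v) := by
    rw [Matrix.sub_mulVec, dotProduct_sub, Matrix.one_mulVec, hnorm]
  rw [heq] at hle
  have hre : (0:ℝ) ≤ (1 - dotProduct (star v) (A *ᵥ v)).re :=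
    (Complex.le_def.mp hle).1
  simp only [Complex.sub_re, Complex.one_re] at hre
  rw [heig]
  simpa using hre

open Matrix in
private lemma aux_trace_coords {N : ℕ} (hN : 1 ≤ N) {ι : Type*} [Fintype ι] [DecidableEq ι]
    (P : Module.Basis ι ℂ (Matrix (Fin N) (Fin N) ℂ))
    (hortho : ∀ i j, (Matrix.trace ((P i)ᴴ * P j)) / (N : ℂ) = if i = j then 1 else 0)
    (A B : Matrix (Fin N) (Fin N) ℂ) :
    (Aᴴ * B).trace = N * ∑ i, (starRingEnd ℂ) (P.repr A i) * P.repr B i := by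
  have hNne : (N : ℂ) ≠ 0 := by exact_mod_cast Nat.pos_of_ne_zero (by omega) |>.ne'
  have horth : ∀ i j, ((P i)ᴴ * P j).trace = if i = j then (N : ℂ) else 0 := by
    intro i j
    have := hortho i j
    field_simp at this
    try rw [this]
    try split <;> simp
  conv_lhs => rw [← P.sum_repr A, ← P.sum_repr B]
  rw [conjTranspose_sum, Finset.sum_mul]
  rw [trace_sum]
  have : ∀ i ∈ Finset.univ, ((P.repr A i • P i)ᴴ * ∑ j, P.repr B j • P j).trace
      = (starRingEnd ℂ) (P.repr A i) * (P.repr B i) * N := by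
    intro i _
    rw [Finset.mul_sum, trace_sum]
    have h1 : ∀ j ∈ Finset.univ, ((P.repr A i • P i)ᴴ * (P.repr B j • P j)).trace
        = (starRingEnd ℂ) (P.repr A i) * P.repr B j * ((P i)ᴴ * (P j)).trace := by
      intro j _
      rw [conjTranspose_smul, smul_mul_assoc, mul_smul_comm, trace_smul, trace_smul]
      simp only [smul_eq_mul, Complex.star_def]
      ring
    rw [Finset.sum_congr rfl h1]
    simp only [horth, mul_ite, mul_zero]
    rw [Finset.sum_ite_eq Finset.univ i]
    simp
  rw [Finset.sum_congr rfl this, ← Finset.sum_mul, mul_comm]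

theorem stmt2 {N : ℕ} (hN : 1 ≤ N) {ι : Type*} [Fintype ι] [DecidableEq ι]
    (P : Module.Basis ι ℂ (Matrix (Fin N) (Fin N) ℂ))
    (hortho : ∀ i j, (Matrix.trace ((P i)ᴴ * P j)) / (N : ℂ) = if i = j then 1 else 0)
    (Φ : Matrix (Fin N) (Fin N) ℂ →ₗ[ℂ] Matrix (Fin N) (Fin N) ℂ)
    (α : ι → ℂ) (hΦ : ∀ i, Φ (P i) = α i • P i)
    (ρ : Matrix (Fin N) (Fin N) ℂ) (hρ : ρ.PosSemidef) (hρtr : ρ.trace = 1)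
    (Pm : Matrix (Fin N) (Fin N) ℂ) (hPm : Pm.PosSemidef) (hPm1 : (1 - Pm).PosSemidef)
    (r : ℕ) (hr : Pm.rank ≤ r) :
    ‖(Pmᴴ * Φ ρ).trace‖ ^ 2 ≤
      ((Pm * Pm).trace).re * (⨆ i, ‖α i‖) ^ 2 ∧
    ((Pm * Pm).trace).re * (⨆ i, ‖α i‖) ^ 2 ≤
      (r : ℝ) * (⨆ i, ‖α i‖) ^ 2 := by
  classical
  haveI : Nonempty (Fin N) := ⟨⟨0, hN⟩⟩
  haveI : Nonempty ι := P.index_nonempty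
  set M : ℝ := ⨆ i, ‖α i‖ with hM
  have hMle : ∀ i, ‖α i‖ ≤ M := fun i =>
    le_ciSup (Set.Finite.bddAbove (Set.finite_range (fun j => ‖α j‖))) i
  have hM0 : 0 ≤ M := le_trans (norm_nonneg _) (hMle (Classical.arbitrary ι))
  set c : ι → ℂ := fun i => P.repr Pm i with hc
  set d : ι → ℂ := fun i => P.repr ρ i with hd
  set S1 : ℝ := ∑ i, ‖c i‖ ^ 2 with hS1
  set S2 : ℝ := ∑ i, ‖d i‖ ^ 2 with hS2
  have habs2 : ∀ f : ι → ℂ, ∑ i, (starRingEnd ℂ) (f i) * f i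
      = ((∑ i, ‖f i‖ ^ 2 : ℝ) : ℂ) := by
    intro f
    push_cast
    refine Finset.sum_congr rfl fun i _ => ?_
    rw [mul_comm, Complex.mul_conj]
    norm_cast
    exact (Complex.sq_norm _).symm
  -- coordinates of Φ ρ
  have hΦρ : Φ ρ = ∑ j, (α j * d j) • P j := by
    conv_lhs => rw [← P.sum_repr ρ, map_sum]
    refine Finset.sum_congr rfl fun j _ => ?_
    rw [map_smul, hΦ j, smul_smul, mul_comm]
  have hreprΦρ : ∀ i, P.repr (Φ ρ) i = α i * d i := by
    intro i
    rw [hΦρ]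
    simp [Finsupp.single_apply]
  -- trace formulas
  have hT : (Pmᴴ * Φ ρ).trace = N * ∑ i, (starRingEnd ℂ) (c i) * (α i * d i) := by
    rw [aux_trace_coords hN P hortho]
    congr 1
    exact Finset.sum_congr rfl fun i _ => by rw [hreprΦρ]
  have hTr2 : (Pm * Pm).trace = (((N : ℝ) * S1 : ℝ) : ℂ) := by
    conv_lhs => rw [show Pm * Pm = Pmᴴ * Pm by rw [hPm.1]]
    rw [aux_trace_coords hN P hortho, habs2, hS1]
    norm_cast
  have hTrρ2 : (ρ * ρ).trace = (((N : ℝ) * S2 : ℝ) : ℂ) := by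
    conv_lhs => rw [show ρ * ρ = ρᴴ * ρ by rw [hρ.1]]
    rw [aux_trace_coords hN P hortho, habs2, hS2]
    norm_cast
  have hTr2re : ((Pm * Pm).trace).re = (N : ℝ) * S1 := by rw [hTr2, Complex.ofReal_re]
  -- eigenvalue facts for ρ : N * S2 ≤ 1
  have hNS2 : (N : ℝ) * S2 ≤ 1 := by
    have h1 := aux_trace_sq_eq hρ.1
    rw [hTrρ2] at h1
    have h1' : (N : ℝ) * S2 = ∑ i, hρ.1.eigenvalues i ^ 2 := by exact_mod_cast h1
    have h2 := aux_trace_eq hρ.1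
    rw [hρtr] at h2
    have h2' : (∑ i, hρ.1.eigenvalues i) = 1 := by exact_mod_cast h2.symm
    have h3 : ∑ i, hρ.1.eigenvalues i ^ 2 ≤ (∑ i, hρ.1.eigenvalues i) ^ 2 :=
      Finset.sum_sq_le_sq_sum_of_nonneg fun i _ => hρ.eigenvalues_nonneg i
    rw [h2'] at h3
    rw [h1']
    simpa using h3
  -- eigenvalue facts for Pm : N * S1 ≤ r
  have hNS1r : (N : ℝ) * S1 ≤ (r : ℝ) := by
    have h1 := aux_trace_sq_eq hPm.1
    rw [hTr2] at h1
    have h1' : (N : ℝ) * S1 = ∑ i, hPm.1.eigenvalues i ^ 2 := by exact_mod_cast h1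
    set lam := hPm.1.eigenvalues with hlam
    have hrank : Pm.rank = (Finset.univ.filter (fun i => lam i ≠ 0)).card := by
      rw [hPm.1.rank_eq_card_non_zero_eigs, Fintype.card_subtype]
    have hsub : ∑ i, lam i ^ 2 = ∑ i ∈ Finset.univ.filter (fun i => lam i ≠ 0), lam i ^ 2 := by
      refine (Finset.sum_subset (Finset.filter_subset _ _) fun i _ hi => ?_).symm
      simp only [Finset.mem_filter, Finset.mem_univ, true_and, not_not] at hi
      simp [hi]
    have hbound : ∑ i ∈ Finset.univ.filter (fun i => lam i ≠ 0), lam i ^ 2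
        ≤ (Finset.univ.filter (fun i => lam i ≠ 0)).card := by
      calc ∑ i ∈ Finset.univ.filter (fun i => lam i ≠ 0), lam i ^ 2
          ≤ ∑ _i ∈ Finset.univ.filter (fun i => lam i ≠ 0), (1:ℝ) := by
            refine Finset.sum_le_sum fun i _ => ?_
            have h0 := hPm.eigenvalues_nonneg i
            have h1 := aux_eig_le_one hPm hPm1 i
            nlinarith
        _ = (Finset.univ.filter (fun i => lam i ≠ 0)).card := by simp
    have : ∑ i, lam i ^ 2 ≤ (Pm.rank : ℝ) := by
      rw [hsub, hrank]; exact_mod_cast hbound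
    have hrr : (Pm.rank : ℝ) ≤ (r : ℝ) := by exact_mod_cast hr
    rw [h1']
    linarith
  have hNS1pos : 0 ≤ (N : ℝ) * S1 := by
    have : 0 ≤ S1 := Finset.sum_nonneg fun i _ => sq_nonneg _
    positivity
  constructor
  · -- Cauchy-Schwarz part
    rw [hT, hTr2re]
    have habsT : ‖(N : ℂ) * ∑ i, (starRingEnd ℂ) (c i) * (α i * d i)‖
        ≤ (N : ℝ) * ∑ i, ‖c i‖ * (‖α i‖ * ‖d i‖) := by
      rw [norm_mul, Complex.norm_natCast]
      refine mul_le_mul_of_nonneg_left ?_ (Nat.cast_nonneg N)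
      refine le_trans (norm_sum_le _ _) (le_of_eq ?_)
      refine Finset.sum_congr rfl fun i _ => ?_
      rw [norm_mul, norm_mul, Complex.norm_conj]
    have hCS : (∑ i, ‖c i‖ * (‖α i‖ * ‖d i‖)) ^ 2
        ≤ S1 * ∑ i, (‖α i‖ * ‖d i‖) ^ 2 :=
      Finset.sum_mul_sq_le_sq_mul_sq Finset.univ _ _
    have hαd : ∑ i, (‖α i‖ * ‖d i‖) ^ 2 ≤ M ^ 2 * S2 := by
      rw [hS2, Finset.mul_sum]
      refine Finset.sum_le_sum fun i _ => ?_
      rw [mul_pow]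
      refine mul_le_mul_of_nonneg_right ?_ (sq_nonneg _)
      exact pow_le_pow_left₀ (norm_nonneg _) (hMle i) 2
    have hS1nn : (0:ℝ) ≤ S1 := Finset.sum_nonneg fun i _ => sq_nonneg _
    have hS2nn : (0:ℝ) ≤ S2 := Finset.sum_nonneg fun i _ => sq_nonneg _
    have hsum_nn : 0 ≤ ∑ i, ‖c i‖ * (‖α i‖ * ‖d i‖) :=
      Finset.sum_nonneg fun i _ => by positivity
    calc ‖(N : ℂ) * ∑ i, (starRingEnd ℂ) (c i) * (α i * d i)‖ ^ 2
        ≤ ((N : ℝ) * ∑ i, ‖c i‖ * (‖α i‖ * ‖d i‖)) ^ 2 := by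
          refine pow_le_pow_left₀ (norm_nonneg _) habsT 2
      _ = (N : ℝ) ^ 2 * (∑ i, ‖c i‖ * (‖α i‖ * ‖d i‖)) ^ 2 := by
          ring
      _ ≤ (N : ℝ) ^ 2 * (S1 * (M ^ 2 * S2)) := by
          refine mul_le_mul_of_nonneg_left ?_ (by positivity)
          refine le_trans hCS (mul_le_mul_of_nonneg_left hαd hS1nn)
      _ = ((N : ℝ) * S1) * M ^ 2 * ((N : ℝ) * S2) := by ring
      _ ≤ ((N : ℝ) * S1) * M ^ 2 * 1 := by
          refine mul_le_mul_of_nonneg_left hNS2 (by positivity)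
      _ = (N : ℝ) * S1 * M ^ 2 := by ring
  · rw [hTr2re]
    exact mul_le_mul_of_nonneg_right hNS1r (sq_nonneg M)
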